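/- Let (b_j)_{j≥1} be a nonincreasing sequence of nonnegative real numbers, and let p ∈ (0,1) be such that Σ_{j≥1} b_j^p < ∞. Then for every integer s ≥ 1, Σ_{j≥s+1} b_j ≤ min(1/(1/p − 1), 1) · (Σ_{j≥1} b_j^p)^{1/p} · s^{−1/p + 1}. -/

import Mathlib

open Real Filter Topology

/-- Bernoulli-based step inequality. -/
lemma aux_step {x q : ℝ} (hx : 1 ≤ x) (hq : 1 ≤ q) :
    q * (x + 1) ^ (-(q + 1)) ≤ x ^ (-q) - (x + 1) ^ (-q) := by
  have hx0 : (0 : ℝ) < x := lt_of_lt_of_le one_pos hx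
  have hc0 : (0 : ℝ) < x + 1 := by linarith
  have hA : 0 < x ^ q := Real.rpow_pos_of_pos hx0 q
  have hB : 0 < (x + 1) ^ q := Real.rpow_pos_of_pos hc0 q
  have hbern : 1 + q * (1 / x) ≤ (1 + 1 / x) ^ q :=
    one_add_mul_self_le_rpow_one_add (by
      have : (0:ℝ) ≤ 1 / x := by positivity
      linarith) hq
  have h1x : (1 : ℝ) + 1 / x = (x + 1) / x := by field_simp
  rw [h1x, Real.div_rpow hc0.le hx0.le, mul_one_div] at hbern
  have h2 : 1 + q / (x + 1) ≤ (x + 1) ^ q / x ^ q := by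
    refine le_trans ?_ hbern
    have : q / (x + 1) ≤ q / x := by
      apply div_le_div_of_nonneg_left (by linarith) hx0 (by linarith)
    linarith
  have key : (1 + q / (x + 1)) * x ^ q ≤ (x + 1) ^ q := by
    calc (1 + q / (x + 1)) * x ^ q ≤ ((x + 1) ^ q / x ^ q) * x ^ q :=
          mul_le_mul_of_nonneg_right h2 hA.le
      _ = (x + 1) ^ q := div_mul_cancel₀ _ hA.ne'
  have key2 : x ^ q * (x + 1) + q * x ^ q ≤ (x + 1) ^ q * (x + 1) := by
    have := mul_le_mul_of_nonneg_right key hc0.le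
    have e : (1 + q / (x + 1)) * x ^ q * (x + 1) = x ^ q * (x + 1) + q * x ^ q := by
      field_simp
    linarith [e ▸ this]
  rw [Real.rpow_neg hx0.le, Real.rpow_neg hc0.le, Real.rpow_neg hc0.le,
    Real.rpow_add hc0 q 1, Real.rpow_one]
  rw [mul_inv, ← mul_assoc]
  have e1 : (x ^ q)⁻¹ - ((x + 1) ^ q)⁻¹ - q * ((x + 1) ^ q)⁻¹ * (x + 1)⁻¹ =
      ((x + 1) ^ q * (x + 1) - (x ^ q * (x + 1) + q * x ^ q)) / (x ^ q * ((x + 1) ^ q * (x + 1))) := by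
    field_simp
    ring
  have e2 : 0 ≤ ((x + 1) ^ q * (x + 1) - (x ^ q * (x + 1) + q * x ^ q)) / (x ^ q * ((x + 1) ^ q * (x + 1))) :=
    div_nonneg (by linarith) (by positivity)
  linarith [e1 ▸ e2]

/-- Telescoping sum. -/
lemma aux_tele (g : ℕ → ℝ) (hg : Antitone g) (h0 : Tendsto g atTop (𝓝 0)) :
    HasSum (fun n => g n - g (n + 1)) (g 0) := by
  rw [hasSum_iff_tendsto_nat_of_nonneg (fun i => sub_nonneg.2 (hg (Nat.le_succ i)))]
  simp only [Finset.sum_range_sub' g]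
  simpa using tendsto_const_nhds.sub h0


/-- Tail-sum bound (from KSS12, Theorem 5.1): for a nonincreasing nonnegative sequence
`b` (here `b n` stands for `b_{n+1}` of the paper) with `∑ b_j^p < ∞`, `0 < p < 1`,
the tail sum `∑_{j ≥ s+1} b_j` is bounded by
`min(1/(1/p − 1), 1) (∑_{j≥1} b_j^p)^{1/p} s^{−1/p+1}`. -/
theorem stmt2 (b : ℕ → ℝ) (hb : ∀ n, 0 ≤ b n) (hmono : Antitone b)
    (p : ℝ) (hp : 0 < p) (hp1 : p < 1)
    (hsum : Summable fun n => b n ^ p) :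
    ∀ s : ℕ, 1 ≤ s →
      (∑' n : ℕ, b (n + s)) ≤
        min (1 / (1 / p - 1)) 1 * (∑' n : ℕ, b n ^ p) ^ (1 / p) * (s : ℝ) ^ (-1 / p + 1) := by
  intro s hs
  set S : ℝ := ∑' n : ℕ, b n ^ p with hS
  have hS0 : 0 ≤ S := tsum_nonneg fun n => Real.rpow_nonneg (hb n) p
  have hp' : (0 : ℝ) < 1 / p := by positivity
  have h1p : (1 : ℝ) < 1 / p := by
    rw [lt_div_iff₀ hp]; linarith
  -- key pointwise bound: b n ^ p * (n+1) ≤ S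
  have hkey : ∀ n : ℕ, b n ^ p * ((n : ℝ) + 1) ≤ S := by
    intro n
    have h1 : ∑ i ∈ Finset.range (n + 1), b n ^ p ≤ ∑ i ∈ Finset.range (n + 1), b i ^ p := by
      refine Finset.sum_le_sum fun i hi => ?_
      exact Real.rpow_le_rpow (hb n) (hmono (Nat.lt_succ_iff.mp (Finset.mem_range.mp hi))) hp.le
    have h2 : ∑ i ∈ Finset.range (n + 1), b i ^ p ≤ S :=
      Summable.sum_le_tsum _ (fun i _ => Real.rpow_nonneg (hb i) p) hsum
    calc b n ^ p * ((n : ℝ) + 1) = ∑ i ∈ Finset.range (n + 1), b n ^ p := by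
          simp [Finset.sum_const, mul_comm]
      _ ≤ S := h1.trans h2
  -- pointwise bound on b n
  have hbn : ∀ n : ℕ, b n ≤ S ^ (1 / p) * ((n : ℝ) + 1) ^ (-(1 / p)) := by
    intro n
    have hn1 : (0 : ℝ) < (n : ℝ) + 1 := by positivity
    have h1 : b n ^ p ≤ S * ((n : ℝ) + 1)⁻¹ := by
      rw [← div_eq_mul_inv, le_div_iff₀ hn1]; exact hkey n
    have h2 : (b n ^ p) ^ (1 / p) ≤ (S * ((n : ℝ) + 1)⁻¹) ^ (1 / p) :=
      Real.rpow_le_rpow (Real.rpow_nonneg (hb n) p) h1 hp'.le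
    rwa [← Real.rpow_mul (hb n), mul_one_div, div_self hp.ne',
      Real.rpow_one, Real.mul_rpow hS0 (by positivity),
      Real.inv_rpow hn1.le, ← Real.rpow_neg hn1.le] at h2
  -- summability of b
  have hshift : Summable (fun n : ℕ => ((n : ℝ) + 1) ^ (-(1 / p))) := by
    have h1 : Summable (fun n : ℕ => (n : ℝ) ^ (-(1 / p))) :=
      Real.summable_nat_rpow.2 (by linarith)
    have h2 := (summable_nat_add_iff 1).2 h1
    refine h2.congr fun n => ?_
    push_cast
    ring_nf
  have hbsum : Summable b :=
    Summable.of_nonneg_of_le hb hbn (hshift.mul_left _)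
  have htail : Summable (fun n => b (n + s)) := (summable_nat_add_iff s).2 hbsum
  have htailp : Summable (fun n => b (n + s) ^ p) := (summable_nat_add_iff s).2 hsum
  have htailp_le : ∑' n, b (n + s) ^ p ≤ S := by
    refine Summable.tsum_le_tsum_of_inj (fun n => n + s) (add_left_injective s)
      (fun c _ => Real.rpow_nonneg (hb c) p) (fun n => le_rfl) htailp hsum
  have hs1 : (1 : ℝ) ≤ (s : ℝ) := by exact_mod_cast hs
  have hs0 : (0 : ℝ) < (s : ℝ) := by linarith
  -- bound A : constant 1
  have hbs : b s ≤ S ^ (1 / p) * (s : ℝ) ^ (-(1 / p)) := by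
    refine (hbn s).trans (mul_le_mul_of_nonneg_left ?_ (Real.rpow_nonneg hS0 _))
    exact Real.rpow_le_rpow_of_nonpos hs0 (by linarith) (by linarith)
  have boundA : ∑' n, b (n + s) ≤ S ^ (1 / p) * (s : ℝ) ^ (-1 / p + 1) := by
    have h1p' : (0 : ℝ) ≤ 1 - p := by linarith
    have step1 : ∑' n, b (n + s) ≤ b s ^ (1 - p) * S := by
      calc ∑' n, b (n + s) ≤ ∑' n, b s ^ (1 - p) * b (n + s) ^ p := by
            refine Summable.tsum_le_tsum (fun n => ?_) htail (htailp.mul_left _)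
            calc b (n + s) = b (n + s) ^ ((1 - p) + p) := by
                  rw [show (1 - p) + p = (1 : ℝ) by ring, Real.rpow_one]
              _ = b (n + s) ^ (1 - p) * b (n + s) ^ p :=
                  Real.rpow_add' (hb _) (by norm_num)
              _ ≤ b s ^ (1 - p) * b (n + s) ^ p :=
                  mul_le_mul_of_nonneg_right
                    (Real.rpow_le_rpow (hb _) (hmono (Nat.le_add_left s n)) h1p')
                    (Real.rpow_nonneg (hb _) p)
        _ = b s ^ (1 - p) * ∑' n, b (n + s) ^ p := tsum_mul_left
        _ ≤ b s ^ (1 - p) * S :=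
            mul_le_mul_of_nonneg_left htailp_le (Real.rpow_nonneg (hb s) _)
    have hbs' : b s ^ (1 - p) ≤ (S ^ (1 / p) * (s : ℝ) ^ (-(1 / p))) ^ (1 - p) :=
      Real.rpow_le_rpow (hb s) hbs h1p'
    have expand : (S ^ (1 / p) * (s : ℝ) ^ (-(1 / p))) ^ (1 - p) * S =
        S ^ (1 / p) * (s : ℝ) ^ (-1 / p + 1) := by
      rw [Real.mul_rpow (Real.rpow_nonneg hS0 _) (Real.rpow_nonneg hs0.le _),
        ← Real.rpow_mul hS0, ← Real.rpow_mul hs0.le]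
      have eS : S ^ (1 / p * (1 - p)) * S = S ^ (1 / p) := by
        calc S ^ (1 / p * (1 - p)) * S = S ^ (1 / p * (1 - p)) * S ^ (1 : ℝ) := by
              rw [Real.rpow_one]
          _ = S ^ (1 / p * (1 - p) + 1) := (Real.rpow_add' hS0 (by
              rw [mul_sub, mul_one, one_div_mul_cancel hp.ne', sub_add_cancel]; exact hp'.ne')).symm
          _ = S ^ (1 / p) := by congr 1; field_simp; ring
      have es : -(1 / p) * (1 - p) = -1 / p + 1 := by field_simp; ring
      rw [es, mul_right_comm, eS]
    calc ∑' n, b (n + s) ≤ b s ^ (1 - p) * S := step1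
      _ ≤ (S ^ (1 / p) * (s : ℝ) ^ (-(1 / p))) ^ (1 - p) * S :=
          mul_le_mul_of_nonneg_right hbs' hS0
      _ = S ^ (1 / p) * (s : ℝ) ^ (-1 / p + 1) := expand
  rcases le_total (1 / (1 / p - 1)) 1 with hmin | hmin
  · -- constant p/(1-p): bound B
    rw [min_eq_left hmin]
    set q : ℝ := 1 / p - 1 with hqdef
    have hq0 : 0 < q := by simp only [hqdef]; linarith
    have hq : 1 ≤ q := by
      rw [div_le_one hq0] at hmin; linarith
    set g : ℕ → ℝ := fun n => ((n : ℝ) + s) ^ (-q) with hgdef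
    have hgmono : Antitone g := by
      intro m n hmn
      exact Real.rpow_le_rpow_of_nonpos (by positivity)
        (by push_cast; have : (m:ℝ) ≤ n := Nat.cast_le.2 hmn; linarith) (by linarith)
    have hg0 : Tendsto g atTop (𝓝 0) := by
      have h1 : Tendsto (fun n : ℕ => (n : ℝ) + s) atTop atTop :=
        tendsto_atTop_add_const_right _ _ tendsto_natCast_atTop_atTop
      exact (tendsto_rpow_neg_atTop hq0).comp h1
    have htele := aux_tele g hgmono hg0
    have hg00 : g 0 = (s : ℝ) ^ (-q) := by simp [hgdef]
    have hstep : ∀ n : ℕ, ((n : ℝ) + s + 1) ^ (-(1 / p)) ≤ (1 / q) * (g n - g (n + 1)) := by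
      intro n
      have hx : (1 : ℝ) ≤ (n : ℝ) + s := by
        have : (0 : ℝ) ≤ (n : ℝ) := Nat.cast_nonneg n
        linarith
      have h1 := aux_step hx hq
      have e1 : -(q + 1) = -(1 / p) := by simp only [hqdef]; ring
      have e2 : g (n + 1) = ((n : ℝ) + s + 1) ^ (-q) := by
        simp only [hgdef]; push_cast; ring_nf
      rw [e1] at h1
      rw [e2, hgdef]
      rw [show q * ((n : ℝ) + ↑s + 1) ^ (-(1 / p)) = ((n : ℝ) + ↑s + 1) ^ (-(1 / p)) * q by ring,
        ← le_div_iff₀ hq0] at h1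
      calc ((n : ℝ) + s + 1) ^ (-(1 / p)) ≤
            (((n : ℝ) + s) ^ (-q) - ((n : ℝ) + s + 1) ^ (-q)) / q := h1
        _ = (1 / q) * (((n : ℝ) + s) ^ (-q) - ((n : ℝ) + s + 1) ^ (-q)) := by ring
    have hsumc : Summable (fun n : ℕ => ((n : ℝ) + s + 1) ^ (-(1 / p))) :=
      Summable.of_nonneg_of_le (fun n => Real.rpow_nonneg (by positivity) _) hstep
        (htele.summable.mul_left _)
    have hterm : ∀ n : ℕ, b (n + s) ≤ S ^ (1 / p) * ((n : ℝ) + s + 1) ^ (-(1 / p)) := by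
      intro n
      have := hbn (n + s)
      rwa [show (((n + s : ℕ) : ℝ) + 1) = (n : ℝ) + s + 1 by push_cast; ring] at this
    have hinner : ∑' n : ℕ, ((n : ℝ) + s + 1) ^ (-(1 / p)) ≤ (1 / q) * (s : ℝ) ^ (-q) := by
      calc ∑' n : ℕ, ((n : ℝ) + s + 1) ^ (-(1 / p))
          ≤ ∑' n : ℕ, (1 / q) * (g n - g (n + 1)) :=
            Summable.tsum_le_tsum hstep hsumc (htele.summable.mul_left _)
        _ = (1 / q) * ∑' n : ℕ, (g n - g (n + 1)) := tsum_mul_left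
        _ = (1 / q) * (s : ℝ) ^ (-q) := by rw [htele.tsum_eq, hg00]
    have edone : -1 / p + 1 = -q := by simp only [hqdef]; ring
    rw [edone]
    calc ∑' n, b (n + s) ≤ ∑' n : ℕ, S ^ (1 / p) * ((n : ℝ) + s + 1) ^ (-(1 / p)) :=
          Summable.tsum_le_tsum hterm htail (hsumc.mul_left _)
      _ = S ^ (1 / p) * ∑' n : ℕ, ((n : ℝ) + s + 1) ^ (-(1 / p)) := tsum_mul_left
      _ ≤ S ^ (1 / p) * ((1 / q) * (s : ℝ) ^ (-q)) :=
          mul_le_mul_of_nonneg_left hinner (Real.rpow_nonneg hS0 _)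
      _ = 1 / q * S ^ (1 / p) * (s : ℝ) ^ (-q) := by ring
  · rw [min_eq_right hmin, one_mul]
    exact boundA
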